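/- The graph H consisting of two disjoint triangles joined by a single edge has exactly 8 maximal independent sets; consequently, the disjoint union of n/6 copies of H is an n-vertex graph with a perfect matching having exactly 2^{n/2} maximal independent sets. -/

import Mathlib

/-- The collection of maximal independent sets of a simple graph. -/
def maxIndepSets {V : Type*} (Γ : SimpleGraph V) : Set (Set V) :=
  {I | (∀ x ∈ I, ∀ y ∈ I, ¬ Γ.Adj x y) ∧
    ∀ J : Set V, (∀ x ∈ J, ∀ y ∈ J, ¬ Γ.Adj x y) → I ⊆ J → I = J}

/-- The graph `H` on 6 vertices consisting of two disjoint triangles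
`{0,1,2}` and `{3,4,5}` joined by the single edge `03`. -/
def twoTriangles : SimpleGraph (Fin 6) :=
  SimpleGraph.fromRel (fun a b =>
    ((a : ℕ), (b : ℕ)) ∈ ({(0,1),(0,2),(1,2),(3,4),(3,5),(4,5),(0,3)} : Set (ℕ × ℕ)))

/-- The disjoint union of `m` copies of `twoTriangles`, realised as the box
product with the empty graph on `Fin m`. -/
def manyCopies (m : ℕ) : SimpleGraph (Fin m × Fin 6) :=
  (⊥ : SimpleGraph (Fin m)) □ twoTriangles

instance : DecidableRel twoTriangles.Adj := fun a b =>
  decidable_of_iff (a ≠ b ∧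
    ((((a:ℕ),(b:ℕ)) = (0,1) ∨ ((a:ℕ),(b:ℕ)) = (0,2) ∨ ((a:ℕ),(b:ℕ)) = (1,2) ∨
      ((a:ℕ),(b:ℕ)) = (3,4) ∨ ((a:ℕ),(b:ℕ)) = (3,5) ∨ ((a:ℕ),(b:ℕ)) = (4,5) ∨
      ((a:ℕ),(b:ℕ)) = (0,3)) ∨
     (((b:ℕ),(a:ℕ)) = (0,1) ∨ ((b:ℕ),(a:ℕ)) = (0,2) ∨ ((b:ℕ),(a:ℕ)) = (1,2) ∨
      ((b:ℕ),(a:ℕ)) = (3,4) ∨ ((b:ℕ),(a:ℕ)) = (3,5) ∨ ((b:ℕ),(a:ℕ)) = (4,5) ∨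
      ((b:ℕ),(a:ℕ)) = (0,3)))) (by
    simp [twoTriangles, SimpleGraph.fromRel_adj, Set.mem_insert_iff])

/-- Pointwise characterisation of maximal independent sets. -/
lemma mem_maxIndepSets_iff {V : Type*} (Γ : SimpleGraph V) (I : Set V) :
    I ∈ maxIndepSets Γ ↔ ∀ v, (v ∈ I ↔ ∀ x ∈ I, ¬ Γ.Adj x v) := by
  constructor
  · rintro ⟨hind, hmax⟩
    intro v
    constructor
    · intro hv x hx
      exact hind x hx v hv
    · intro hv
      by_contra hvI
      have hJ : ∀ x ∈ insert v I, ∀ y ∈ insert v I, ¬ Γ.Adj x y := by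
        rintro x (rfl | hx) y (rfl | hy)
        · simp
        · intro h; exact hv y hy (h.symm)
        · exact hv x hx
        · exact hind x hx y hy
      have := hmax (insert v I) hJ (Set.subset_insert v I)
      exact hvI (this ▸ Set.mem_insert v I)
  · intro h
    refine ⟨fun x hx y hy hadj => (h y).mp hy x hx hadj, fun J hJ hIJ => ?_⟩
    apply Set.Subset.antisymm hIJ
    intro v hv
    exact (h v).mpr fun x hx => hJ x (hIJ hx) v hv

lemma nbr2 (I : Set (Fin 6)) (v a b : Fin 6)
    (hab : ∀ x : Fin 6, twoTriangles.Adj x v ↔ (x = a ∨ x = b)) :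
    (∀ x ∈ I, ¬ twoTriangles.Adj x v) ↔ (a ∉ I ∧ b ∉ I) := by
  constructor
  · intro h
    exact ⟨fun ha => h a ha ((hab a).mpr (Or.inl rfl)),
           fun hb => h b hb ((hab b).mpr (Or.inr rfl))⟩
  · rintro ⟨p, q⟩ x hx hadj
    rcases (hab x).mp hadj with rfl | rfl
    exacts [p hx, q hx]

lemma nbr3 (I : Set (Fin 6)) (v a b c : Fin 6)
    (hab : ∀ x : Fin 6, twoTriangles.Adj x v ↔ (x = a ∨ x = b ∨ x = c)) :
    (∀ x ∈ I, ¬ twoTriangles.Adj x v) ↔ (a ∉ I ∧ b ∉ I ∧ c ∉ I) := by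
  constructor
  · intro h
    exact ⟨fun ha => h a ha ((hab a).mpr (Or.inl rfl)),
           fun hb => h b hb ((hab b).mpr (Or.inr (Or.inl rfl))),
           fun hc => h c hc ((hab c).mpr (Or.inr (Or.inr rfl)))⟩
  · rintro ⟨p, q, r⟩ x hx hadj
    rcases (hab x).mp hadj with rfl | rfl | rfl
    exacts [p hx, q hx, r hx]

set_option maxHeartbeats 1000000 in
/-- The 8 maximal independent sets of the two-triangles graph. -/
lemma classify : maxIndepSets twoTriangles =
    {({0,4} : Set (Fin 6)), {0,5}, {1,3}, {1,4}, {1,5}, {2,3}, {2,4}, {2,5}} := by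
  ext I
  rw [mem_maxIndepSets_iff]
  simp only [Set.mem_insert_iff, Set.mem_singleton_iff]
  constructor
  · intro h
    have e0 := (h 0).trans (nbr3 I 0 1 2 3 (by decide))
    have e1 := (h 1).trans (nbr2 I 1 0 2 (by decide))
    have e2 := (h 2).trans (nbr2 I 2 0 1 (by decide))
    have e3 := (h 3).trans (nbr3 I 3 0 4 5 (by decide))
    have e4 := (h 4).trans (nbr2 I 4 3 5 (by decide))
    have e5 := (h 5).trans (nbr2 I 5 3 4 (by decide))
    clear h
    by_cases h0 : (0:Fin 6) ∈ I
    · obtain ⟨n1, n2, n3⟩ := e0.mp h0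
      by_cases h4 : (4:Fin 6) ∈ I
      · have n5 : (5:Fin 6) ∉ I := fun h5 => (e5.mp h5).2 h4
        clear e0 e1 e2 e3 e4 e5
        exact Or.inl (by ext v; fin_cases v <;> simp_all)
      · have h5 : (5:Fin 6) ∈ I := e5.mpr ⟨n3, h4⟩
        clear e0 e1 e2 e3 e4 e5
        exact Or.inr (Or.inl (by ext v; fin_cases v <;> simp_all))
    · have htri2 : ((3:Fin 6) ∈ I ∧ (4:Fin 6) ∉ I ∧ (5:Fin 6) ∉ I) ∨
          ((3:Fin 6) ∉ I ∧ (4:Fin 6) ∈ I ∧ (5:Fin 6) ∉ I) ∨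
          ((3:Fin 6) ∉ I ∧ (4:Fin 6) ∉ I ∧ (5:Fin 6) ∈ I) := by
        by_cases h3 : (3:Fin 6) ∈ I
        · obtain ⟨-, n4, n5⟩ := e3.mp h3
          exact Or.inl ⟨h3, n4, n5⟩
        · by_cases h4 : (4:Fin 6) ∈ I
          · exact Or.inr (Or.inl ⟨h3, h4, fun h5 => (e5.mp h5).2 h4⟩)
          · exact Or.inr (Or.inr ⟨h3, h4, e5.mpr ⟨h3, h4⟩⟩)
      by_cases h1 : (1:Fin 6) ∈ I
      · have n2 := (e1.mp h1).2
        clear e0 e1 e2 e3 e4 e5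
        rcases htri2 with ⟨h3, n4, n5⟩ | ⟨n3, h4, n5⟩ | ⟨n3, n4, h5⟩
        · exact Or.inr (Or.inr (Or.inl (by ext v; fin_cases v <;> simp_all)))
        · exact Or.inr (Or.inr (Or.inr (Or.inl (by ext v; fin_cases v <;> simp_all))))
        · exact Or.inr (Or.inr (Or.inr (Or.inr (Or.inl (by ext v; fin_cases v <;> simp_all)))))
      · have h2 : (2:Fin 6) ∈ I := e2.mpr ⟨h0, h1⟩
        clear e0 e1 e2 e3 e4 e5
        rcases htri2 with ⟨h3, n4, n5⟩ | ⟨n3, h4, n5⟩ | ⟨n3, n4, h5⟩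
        · exact Or.inr (Or.inr (Or.inr (Or.inr (Or.inr (Or.inl
            (by ext v; fin_cases v <;> simp_all))))))
        · exact Or.inr (Or.inr (Or.inr (Or.inr (Or.inr (Or.inr (Or.inl
            (by ext v; fin_cases v <;> simp_all)))))))
        · exact Or.inr (Or.inr (Or.inr (Or.inr (Or.inr (Or.inr (Or.inr
            (by ext v; fin_cases v <;> simp_all)))))))
  · rintro (rfl | rfl | rfl | rfl | rfl | rfl | rfl | rfl) <;>
      (intro v; simp only [Set.mem_insert_iff, Set.mem_singleton_iff]; revert v; decide)

lemma card_eight : (maxIndepSets twoTriangles).ncard = 8 := by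
  have himg : ({({0,4} : Set (Fin 6)), {0,5}, {1,3}, {1,4}, {1,5}, {2,3}, {2,4}, {2,5}}
      : Set (Set (Fin 6))) =
      (fun F : Finset (Fin 6) => (↑F : Set (Fin 6))) ''
      ↑({{0,4},{0,5},{1,3},{1,4},{1,5},{2,3},{2,4},{2,5}} : Finset (Finset (Fin 6))) := by
    simp [Finset.coe_insert, Set.image_insert_eq]
  rw [classify, himg, Set.ncard_image_of_injective _ Finset.coe_injective,
    Set.ncard_coe_finset]
  decide

lemma manyCopies_adj {m : ℕ} (p q : Fin m × Fin 6) :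
    (manyCopies m).Adj p q ↔ twoTriangles.Adj p.2 q.2 ∧ p.1 = q.1 := by
  simp [manyCopies, SimpleGraph.boxProd_adj]

lemma mem_maxIndepSets_manyCopies_iff (m : ℕ) (I : Set (Fin m × Fin 6)) :
    I ∈ maxIndepSets (manyCopies m) ↔
      ∀ i : Fin m, {b | (i, b) ∈ I} ∈ maxIndepSets twoTriangles := by
  simp only [mem_maxIndepSets_iff]
  constructor
  · intro h i b
    constructor
    · intro hb c hc hadj
      exact (h (i, b)).mp hb (i, c) hc ((manyCopies_adj _ _).mpr ⟨hadj, rfl⟩)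
    · intro hb
      refine (h (i, b)).mpr ?_
      rintro ⟨j, c⟩ hq hadj
      obtain ⟨hΓ, hj⟩ := (manyCopies_adj _ _).mp hadj
      subst hj
      exact hb c hq hΓ
  · rintro h ⟨i, b⟩
    constructor
    · intro hp
      rintro ⟨j, c⟩ hq hadj
      obtain ⟨hΓ, hj⟩ := (manyCopies_adj _ _).mp hadj
      subst hj
      exact ((h j) b).mp hp c hq hΓ
    · intro hp
      exact ((h i) b).mpr fun c hc hadj =>
        hp (i, c) hc ((manyCopies_adj _ _).mpr ⟨hadj, rfl⟩)

/-- Maximal independent sets of the disjoint union correspond to tuples of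
maximal independent sets of the components. -/
noncomputable def manyCopiesEquiv (m : ℕ) :
    (maxIndepSets (manyCopies m)) ≃ (Fin m → maxIndepSets twoTriangles) where
  toFun I := fun i => ⟨{b | (i, b) ∈ I.1}, (mem_maxIndepSets_manyCopies_iff m I.1).mp I.2 i⟩
  invFun f := ⟨{p | p.2 ∈ (f p.1).1},
    (mem_maxIndepSets_manyCopies_iff m _).mpr fun i => by
      simpa only [Set.mem_setOf_eq, Set.setOf_mem_eq] using (f i).2⟩
  left_inv I := Subtype.ext (by ext ⟨i, b⟩; rfl)
  right_inv f := funext fun i => Subtype.ext (by simp [Set.setOf_mem_eq])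

lemma card_manyCopies (m : ℕ) : (maxIndepSets (manyCopies m)).ncard = 8 ^ m := by
  have h1 : (maxIndepSets (manyCopies m)).ncard = Nat.card (maxIndepSets (manyCopies m)) :=
    (Nat.card_coe_set_eq _).symm
  rw [h1, Nat.card_congr (manyCopiesEquiv m), Nat.card_fun,
    Nat.card_eq_fintype_card (α := Fin m), Fintype.card_fin,
    Nat.card_coe_set_eq, card_eight]

/-- The perfect matching on each copy: `0–3`, `1–2`, `4–5`. -/
def matchFun : Fin 6 → Fin 6 := ![3, 2, 1, 0, 5, 4]

lemma matchFun_adj : ∀ b : Fin 6, twoTriangles.Adj b (matchFun b) := by decide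

lemma matchFun_invol : ∀ b : Fin 6, matchFun (matchFun b) = b := by decide

def matchingSub (m : ℕ) : (manyCopies m).Subgraph where
  verts := Set.univ
  Adj p q := p.1 = q.1 ∧ q.2 = matchFun p.2
  adj_sub := by
    rintro ⟨i, b⟩ ⟨j, c⟩ ⟨h1, h2⟩
    exact (manyCopies_adj _ _).mpr ⟨h2 ▸ matchFun_adj b, h1⟩
  edge_vert := fun _ => Set.mem_univ _
  symm := by
    constructor
    rintro ⟨i, b⟩ ⟨j, c⟩ ⟨h1, h2⟩
    exact ⟨h1.symm, by rw [h2, matchFun_invol]⟩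

lemma matchingSub_perfect (m : ℕ) : (matchingSub m).IsPerfectMatching := by
  constructor
  · rintro ⟨i, b⟩ -
    refine ⟨(i, matchFun b), ⟨rfl, rfl⟩, ?_⟩
    rintro ⟨j, c⟩ ⟨h1, h2⟩
    exact Prod.ext h1.symm h2
  · exact fun _ => Set.mem_univ _

/-- the two-triangles graph `H` has exactly 8 maximal independent
sets; consequently the disjoint union of `n/6 = m` copies of `H` is an `n`-vertex
graph with a perfect matching having exactly `2^{n/2}` maximal independent sets. -/
theorem stmt11 (m : ℕ) :
    (maxIndepSets twoTriangles).ncard = 8 ∧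
    (maxIndepSets (manyCopies m)).ncard = 2 ^ ((6 * m) / 2) ∧
    ∃ M : (manyCopies m).Subgraph, M.IsPerfectMatching := by
  refine ⟨card_eight, ?_, ⟨matchingSub m, matchingSub_perfect m⟩⟩
  rw [card_manyCopies]
  have h2 : (6 * m) / 2 = 3 * m := by omega
  rw [h2, pow_mul]
  norm_num
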